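/- For the inverse Gaussian density p(t,y) = (t/(σ√(2π y³))) exp(−(μy−t)²/(2yσ²)) on y>0, the Laplace transform in y satisfies ∫₀^∞ e^{−αy} p(t,y) dy = exp(−(t/σ²)(√(2ασ²+μ²) − μ)) for all α ≥ 0, t > 0, μ > 0, σ > 0. -/

import Mathlib

open MeasureTheory Real Set

/-- Inverse Gaussian transition density (starting at 0): `p μ σ t y`. -/
noncomputable def igDensity (μ σ t y : ℝ) : ℝ :=
  if 0 < y then (t / (σ * Real.sqrt (2 * Real.pi * y ^ 3))) *
    Real.exp (-(μ * y - t) ^ 2 / (2 * y * σ ^ 2)) else 0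

noncomputable def gK (s : ℝ) : ℝ := (Real.sqrt (2*Real.pi))⁻¹ * Real.exp (-(1/2:ℝ) * s^2)
noncomputable def phiF (μ σ t y : ℝ) : ℝ := (μ*y - t)/(σ*Real.sqrt y)
noncomputable def phiD (μ σ t y : ℝ) : ℝ := (μ*y + t)/(2*σ*(y*Real.sqrt y))
noncomputable def BF (μ σ t y : ℝ) : ℝ := (μ*y - t)/(2*σ*(y*Real.sqrt y)) * gK (phiF μ σ t y)

section aux
variable {μ σ t : ℝ}

lemma sqrt2pi_pos : (0:ℝ) < Real.sqrt (2*Real.pi) := Real.sqrt_pos.mpr (by positivity)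

lemma gK_int : Integrable gK := by
  unfold gK
  exact (integrable_exp_neg_mul_sq (by norm_num : (0:ℝ) < 1/2)).const_mul _

lemma gK_one : ∫ s, gK s = 1 := by
  unfold gK
  rw [MeasureTheory.integral_const_mul, integral_gaussian, show π / (1/2:ℝ) = 2*π by ring]
  exact inv_mul_cancel₀ sqrt2pi_pos.ne'

lemma gK_nonneg (s : ℝ) : 0 ≤ gK s := by unfold gK; positivity

lemma gK_even (s : ℝ) : gK (-s) = gK s := by unfold gK; rw [neg_sq]

lemma gK_cont : Continuous gK := by
  unfold gK
  exact continuous_const.mul (Real.continuous_exp.comp (by continuity))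

lemma phi_hasDerivAt (hσ : 0 < σ) {y : ℝ} (hy : 0 < y) :
    HasDerivAt (fun y => phiF μ σ t y) (phiD μ σ t y) y := by
  have hsy : (0:ℝ) < Real.sqrt y := Real.sqrt_pos.mpr hy
  have hyy : Real.sqrt y * Real.sqrt y = y := Real.mul_self_sqrt hy.le
  have h1 : HasDerivAt (fun y : ℝ => μ * y - t) μ y := by
    simpa using ((hasDerivAt_id y).const_mul μ).sub_const t
  have h2 : HasDerivAt (fun y : ℝ => σ * Real.sqrt y) (σ * (1 / (2 * Real.sqrt y))) y :=
    (Real.hasDerivAt_sqrt hy.ne').const_mul σ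
  have h3 := h1.div h2 (by positivity)
  unfold phiF phiD
  refine h3.congr_deriv ?_
  symm
  field_simp
  linear_combination (t - μ*y) * hyy

lemma phi_surj (hμ : 0 < μ) (hσ : 0 < σ) (ht : 0 < t) :
    (fun y => phiF μ σ t y) '' Ioi 0 = univ := by
  apply eq_univ_of_forall
  intro s
  set R := Real.sqrt (s^2*σ^2 + 4*μ*t) with hRdef
  have hR2 : R^2 = s^2*σ^2 + 4*μ*t := Real.sq_sqrt (by positivity)
  have hRgt : |s*σ| < R := by
    have h1 : Real.sqrt ((s*σ)^2) < R := by
      apply Real.sqrt_lt_sqrt (by positivity)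
      nlinarith
    simpa [Real.sqrt_sq_eq_abs] using h1
  have hu : 0 < (s*σ + R)/(2*μ) := by
    have : -(s*σ) < R := lt_of_le_of_lt (neg_le_abs _) hRgt
    have h0 : 0 < s*σ + R := by linarith
    exact div_pos h0 (by linarith)
  set u := (s*σ + R)/(2*μ) with hudef
  refine ⟨u^2, mem_Ioi.mpr (by positivity), ?_⟩
  have hsu : Real.sqrt (u^2) = u := Real.sqrt_sq hu.le
  have hroot : μ * u^2 - t = σ * s * u := by
    rw [hudef]; field_simp; nlinarith [hR2]
  show (μ * u^2 - t) / (σ * Real.sqrt (u^2)) = s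
  rw [hsu, hroot]
  field_simp

lemma phi_inj (hμ : 0 < μ) (hσ : 0 < σ) (ht : 0 < t) :
    InjOn (fun y => phiF μ σ t y) (Ioi 0) := by
  apply StrictMonoOn.injOn
  apply strictMonoOn_of_deriv_pos (convex_Ioi 0)
  · unfold phiF
    apply ContinuousOn.div (by fun_prop)
      ((continuous_const.mul Real.continuous_sqrt).continuousOn)
    intro y hy
    have : 0 < Real.sqrt y := Real.sqrt_pos.mpr hy
    dsimp only [Pi.mul_apply]
    positivity
  · intro y hy
    rw [interior_Ioi] at hy
    rw [(phi_hasDerivAt hσ hy).deriv]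
    have h1 : 0 < Real.sqrt y := Real.sqrt_pos.mpr hy
    have h2 := hy.out
    unfold phiD
    positivity

lemma phiD_pos (hμ : 0 < μ) (hσ : 0 < σ) (ht : 0 < t) {y : ℝ} (hy : 0 < y) :
    0 < phiD μ σ t y := by
  have hs : 0 < Real.sqrt y := Real.sqrt_pos.mpr hy
  unfold phiD
  positivity

lemma phiF_neg (hμ : 0 < μ) (hσ : 0 < σ) (ht : 0 < t) {s : ℝ} (hs0 : 0 < s) :
    phiF μ σ t (t^2/μ^2 * (s^2)⁻¹) = -phiF μ σ t (s^2) := by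
  have hw : t^2/μ^2 * (s^2)⁻¹ = (t/(μ*s))^2 := by
    field_simp
  unfold phiF
  rw [hw, Real.sqrt_sq (by positivity), Real.sqrt_sq hs0.le]
  rw [div_pow]
  field_simp
  ring

lemma BF_key (hμ : 0 < μ) (hσ : 0 < σ) (ht : 0 < t) :
    ∀ z ∈ Ioi (0:ℝ), |(-(t^2/μ^2) * (z^2)⁻¹)| * BF μ σ t (t^2/μ^2 * z⁻¹) = -BF μ σ t z := by
  intro z hz
  have h0 := hz.out
  obtain ⟨s, hs0, rfl⟩ : ∃ s : ℝ, 0 < s ∧ s^2 = z :=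
    ⟨Real.sqrt z, Real.sqrt_pos.mpr h0, Real.sq_sqrt h0.le⟩
  have habs : |(-(t^2/μ^2) * ((s^2)^2)⁻¹)| = t^2/(μ^2*(s^2)^2) := by
    rw [abs_mul, abs_neg, abs_of_pos (by positivity : (0:ℝ) < t^2/μ^2),
      abs_of_pos (by positivity : (0:ℝ) < (((s:ℝ)^2)^2)⁻¹)]
    field_simp
  have hw : t^2/μ^2 * (s^2)⁻¹ = (t/(μ*s))^2 := by
    field_simp
  unfold BF
  rw [habs, phiF_neg hμ hσ ht hs0, gK_even, hw, Real.sqrt_sq (by positivity),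
    Real.sqrt_sq hs0.le, div_pow]
  generalize gK (phiF μ σ t (s^2)) = X
  field_simp
  ring

lemma ig_norm (hμ : 0 < μ) (hσ : 0 < σ) (ht : 0 < t) :
    ∫ y in Ioi (0:ℝ), igDensity μ σ t y = 1 := by
  have hderiv : ∀ y ∈ Ioi (0:ℝ), HasDerivWithinAt (fun y => phiF μ σ t y)
      (phiD μ σ t y) (Ioi 0) y :=
    fun y hy => (phi_hasDerivAt hσ hy).hasDerivWithinAt
  have hinj := phi_inj hμ hσ ht
  have himg := phi_surj hμ hσ ht
  have hA_eq : ∫ y in Ioi (0:ℝ), |phiD μ σ t y| * gK (phiF μ σ t y) = 1 := by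
    have h := integral_image_eq_integral_abs_deriv_smul measurableSet_Ioi hderiv hinj gK
    rw [himg] at h
    simp only [smul_eq_mul] at h
    rw [← h, MeasureTheory.setIntegral_univ]
    exact gK_one
  have hA_int : IntegrableOn (fun y => |phiD μ σ t y| * gK (phiF μ σ t y)) (Ioi 0) := by
    have h := (integrableOn_image_iff_integrableOn_abs_deriv_smul measurableSet_Ioi
      hderiv hinj gK).mp
    simp only [smul_eq_mul] at h
    apply h
    rw [himg]
    exact gK_int.integrableOn
  have hφcont : ContinuousOn (fun y => phiF μ σ t y) (Ioi 0) := by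
    unfold phiF
    apply ContinuousOn.div (by fun_prop)
      ((continuous_const.mul Real.continuous_sqrt).continuousOn)
    intro y hy
    have : 0 < Real.sqrt y := Real.sqrt_pos.mpr hy
    dsimp only [Pi.mul_apply]
    positivity
  have hB_cont : ContinuousOn (fun y => BF μ σ t y) (Ioi 0) := by
    unfold BF
    apply ContinuousOn.mul
    · apply ContinuousOn.div (by fun_prop)
        ((continuous_const.mul (continuous_id.mul Real.continuous_sqrt)).continuousOn)
      intro y hy
      have h1 : 0 < Real.sqrt y := Real.sqrt_pos.mpr hy
      have h2 := hy.out
      dsimp only [Pi.mul_apply, id]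
      positivity
    · exact gK_cont.comp_continuousOn hφcont
  have hB_int : IntegrableOn (fun y => BF μ σ t y) (Ioi 0) := by
    apply Integrable.mono' hA_int (hB_cont.aestronglyMeasurable measurableSet_Ioi)
    rw [ae_restrict_iff' measurableSet_Ioi]
    filter_upwards with y hy
    have h0 := hy.out
    have hs : 0 < Real.sqrt y := Real.sqrt_pos.mpr h0
    rw [Real.norm_eq_abs, abs_of_pos (phiD_pos hμ hσ ht h0)]
    unfold BF phiD
    rw [abs_mul, abs_of_nonneg (gK_nonneg _)]
    apply mul_le_mul_of_nonneg_right _ (gK_nonneg _)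
    rw [abs_div, abs_of_pos (by positivity : (0:ℝ) < 2*σ*(y*Real.sqrt y))]
    apply div_le_div_of_nonneg_right ?_ (by positivity)
    rw [abs_le]
    constructor <;> nlinarith
  have hψderiv : ∀ z ∈ Ioi (0:ℝ), HasDerivWithinAt (fun z => t^2/μ^2 * z⁻¹)
      (-(t^2/μ^2) * (z^2)⁻¹) (Ioi 0) z := by
    intro z hz
    have h := ((hasDerivAt_inv (ne_of_gt hz.out)).const_mul (t^2/μ^2)).hasDerivWithinAt
      (s := Ioi (0:ℝ))
    refine h.congr_deriv ?_
    ring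
  have hψinj : InjOn (fun z => t^2/μ^2 * z⁻¹) (Ioi 0) := by
    intro a _ b _ h
    have ht2 : t^2/μ^2 ≠ 0 := by positivity
    exact inv_injective (mul_left_cancel₀ ht2 h)
  have hψimg : (fun z => t^2/μ^2 * z⁻¹) '' Ioi 0 = Ioi 0 := by
    ext y
    simp only [mem_image, mem_Ioi]
    constructor
    · rintro ⟨z, hz, rfl⟩; positivity
    · intro hy
      refine ⟨t^2/μ^2 * y⁻¹, by positivity, ?_⟩
      field_simp
  have hB0 : ∫ y in Ioi (0:ℝ), BF μ σ t y = 0 := by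
    have h := integral_image_eq_integral_abs_deriv_smul measurableSet_Ioi hψderiv hψinj
      (fun y => BF μ σ t y)
    rw [hψimg] at h
    simp only [smul_eq_mul] at h
    rw [setIntegral_congr_fun measurableSet_Ioi (BF_key hμ hσ ht), integral_neg] at h
    linarith
  have hpt : ∀ y ∈ Ioi (0:ℝ), igDensity μ σ t y
      = |phiD μ σ t y| * gK (phiF μ σ t y) - BF μ σ t y := by
    intro y hy
    have h0 := hy.out
    obtain ⟨s, hs0, rfl⟩ : ∃ s : ℝ, 0 < s ∧ s^2 = y :=
      ⟨Real.sqrt y, Real.sqrt_pos.mpr h0, Real.sq_sqrt h0.le⟩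
    rw [abs_of_pos (phiD_pos hμ hσ ht h0)]
    unfold igDensity BF phiD phiF gK
    rw [if_pos h0]
    have hs3 : Real.sqrt (2*π*(s^2)^3) = Real.sqrt (2*π) * (s^2 * s) := by
      rw [show 2*π*(s^2)^3 = (2*π)*(s^3)^2 by ring,
        Real.sqrt_mul (by positivity : (0:ℝ) ≤ 2*π), Real.sqrt_sq (by positivity)]
      ring
    have hsqs : Real.sqrt (s^2) = s := Real.sqrt_sq hs0.le
    have hexp : -(μ*s^2 - t)^2/(2*s^2*σ^2) = -(1/2:ℝ) * ((μ*s^2 - t)/(σ*Real.sqrt (s^2)))^2 := by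
      rw [hsqs]
      field_simp
    rw [hs3, hexp, hsqs]
    generalize Real.exp (-(1/2:ℝ) * ((μ*s^2 - t)/(σ*s))^2) = X
    have h2π := sqrt2pi_pos
    field_simp
    ring
  rw [setIntegral_congr_fun measurableSet_Ioi hpt, integral_sub hA_int hB_int, hA_eq, hB0]
  ring

end aux

theorem laplace_of_inverse_gaussian_density
    (μ σ t α : ℝ) (hμ : 0 < μ) (hσ : 0 < σ) (ht : 0 < t) (hα : 0 ≤ α) :
    ∫ y in Set.Ioi (0 : ℝ), Real.exp (-α * y) * igDensity μ σ t y
      = Real.exp (-(t / σ ^ 2) * (Real.sqrt (2 * α * σ ^ 2 + μ ^ 2) - μ)) := by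
  set μ' := Real.sqrt (2 * α * σ ^ 2 + μ ^ 2) with hμ'def
  have hμ'pos : 0 < μ' := Real.sqrt_pos.mpr (by positivity)
  have hsq : μ' ^ 2 = 2 * α * σ ^ 2 + μ ^ 2 := Real.sq_sqrt (by positivity)
  have hpt : ∀ y ∈ Ioi (0:ℝ), Real.exp (-α * y) * igDensity μ σ t y
      = Real.exp (-(t / σ ^ 2) * (μ' - μ)) * igDensity μ' σ t y := by
    intro y hy
    have h0 := hy.out
    unfold igDensity
    rw [if_pos h0, if_pos h0]
    have hexp : Real.exp (-α*y) * Real.exp (-(μ*y-t)^2/(2*y*σ^2))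
        = Real.exp (-(t/σ^2)*(μ'-μ)) * Real.exp (-(μ'*y-t)^2/(2*y*σ^2)) := by
      rw [← Real.exp_add, ← Real.exp_add]
      congr 1
      field_simp
      linear_combination (y^2) * hsq
    calc Real.exp (-α * y) * (t / (σ * Real.sqrt (2 * π * y ^ 3)) * Real.exp (-(μ*y-t)^2/(2*y*σ^2)))
        = t / (σ * Real.sqrt (2 * π * y ^ 3)) * (Real.exp (-α*y) * Real.exp (-(μ*y-t)^2/(2*y*σ^2))) := by ring
      _ = t / (σ * Real.sqrt (2 * π * y ^ 3)) * (Real.exp (-(t/σ^2)*(μ'-μ)) * Real.exp (-(μ'*y-t)^2/(2*y*σ^2))) := by rw [hexp]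
      _ = Real.exp (-(t / σ ^ 2) * (μ' - μ)) * (t / (σ * Real.sqrt (2 * π * y ^ 3)) * Real.exp (-(μ'*y-t)^2/(2*y*σ^2))) := by ring
  rw [setIntegral_congr_fun measurableSet_Ioi hpt, MeasureTheory.integral_const_mul,
    ig_norm hμ'pos hσ ht, mul_one]
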